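/- Let r and v be positive integers, let c : Fin r → Fin v be a surjective map (assigning each state its partition class), and for each class η let n_η > 0 be the number of states in class η. Define the v×r matrix U by U[η][i] = 1/n_{c(i)} if c(i) = η and 0 otherwise, and the r×v matrix V by V[i][η] = 1 if c(i) = η and 0 otherwise. Then for any r×r real matrix P, the following are equivalent: (1) for all states i, j with c(i) = c(j) and every class η, ∑_{k : c(k)=η} P[i][k] = ∑_{k : c(k)=η} P[j][k]; (2) V·U·P·V = P·V. -/

import Mathlib

open Finset in
theorem lumpability_matrix_characterization (r v : ℕ)
    (c : Fin r → Fin v) (hc : Function.Surjective c)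
    (nClass : Fin v → ℕ)
    (hn : ∀ η, nClass η = (Finset.univ.filter fun i => c i = η).card)
    (hnpos : ∀ η, 0 < nClass η)
    (U : Matrix (Fin v) (Fin r) ℝ)
    (hU : U = Matrix.of fun η i => if c i = η then (1 : ℝ) / nClass (c i) else 0)
    (V : Matrix (Fin r) (Fin v) ℝ)
    (hV : V = Matrix.of fun i η => if c i = η then (1 : ℝ) else 0)
    (P : Matrix (Fin r) (Fin r) ℝ) :
    (∀ i j : Fin r, c i = c j → ∀ η : Fin v,
        ∑ k ∈ Finset.univ.filter (fun k => c k = η), P i k =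
        ∑ k ∈ Finset.univ.filter (fun k => c k = η), P j k) ↔
      V * U * P * V = P * V := by
  set S : Fin r → Fin v → ℝ := fun i η => ∑ k ∈ Finset.univ.filter (fun k => c k = η), P i k with hS
  have hPV : ∀ i η, (P * V) i η = S i η := by
    intro i η
    simp only [Matrix.mul_apply, hV, Matrix.of_apply, hS]
    rw [Finset.sum_filter]
    congr 1; ext k
    by_cases h : c k = η <;> simp [h]
  have hVU : ∀ i j, (V * U) i j = if c j = c i then (1 : ℝ) / nClass (c i) else 0 := by
    intro i j
    simp only [Matrix.mul_apply, hV, hU, Matrix.of_apply]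
    rw [Finset.sum_eq_single (c i)]
    · by_cases h : c j = c i <;> simp [h]
    · intro b _ hb; simp [hb.symm]
    · simp
  have hLHS : ∀ i η, (V * U * P * V) i η =
      ∑ j ∈ Finset.univ.filter (fun j => c j = c i), (1 / (nClass (c i) : ℝ)) * S j η := by
    intro i η
    rw [Matrix.mul_assoc (V * U) P V, Matrix.mul_apply, Finset.sum_filter]
    congr 1; ext j
    rw [hVU, hPV]
    by_cases h : c j = c i <;> simp [h]
  constructor
  · intro h
    ext i η
    rw [hLHS, hPV]
    have : ∀ j ∈ Finset.univ.filter (fun j => c j = c i),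
        (1 / (nClass (c i) : ℝ)) * S j η = (1 / (nClass (c i) : ℝ)) * S i η := by
      intro j hj
      simp only [Finset.mem_filter] at hj
      simp only [hS]
      rw [h j i hj.2 η]
    rw [Finset.sum_congr rfl this, Finset.sum_const, ← hn]
    have hne : ((nClass (c i) : ℝ)) ≠ 0 := Nat.cast_ne_zero.mpr (hnpos (c i)).ne'
    rw [nsmul_eq_mul]
    field_simp
  · intro h i j hij η
    have hi := congrFun (congrFun h i) η
    have hj := congrFun (congrFun h j) η
    rw [hLHS, hPV] at hi hj
    rw [hij] at hi
    show S i η = S j η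
    rw [← hi, ← hj]
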